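/- (Eigenvector derivative bound in the general eigenvalue case.) Let d ≥ 1, λ > 0, M₁ ≥ 0. Let H : ℝ → Matrix (Fin d) (Fin d) ℂ be differentiable on [0,1] with each H(s) Hermitian and ‖H'(s)‖ ≤ M₁ for all s ∈ [0,1]. Let Ψ : ℝ → EuclideanSpace ℂ (Fin d) be differentiable on [0,1] with ‖Ψ(s)‖ = 1 and ⟨Ψ'(s), Ψ(s)⟩ = 0 for all s ∈ [0,1], and let γ : ℝ → ℝ be differentiable on [0,1], such that H(s) Ψ(s) = γ(s) Ψ(s) for all s ∈ [0,1]. Assume that for every s ∈ [0,1] the eigenspace of H(s) for the eigenvalue γ(s) is one-dimensional (spanned by Ψ(s)) and every eigenvalue μ ≠ γ(s) of H(s) satisfies |μ − γ(s)| ≥ λ. Then for every s ∈ [0,1], ‖Ψ'(s)‖ ≤ 2·M₁/λ. -/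

import Mathlib

open scoped InnerProductSpace

/-- The continuous linear map on Euclidean space associated to a matrix;
its operator norm is the operator norm induced by the Euclidean norm. -/
noncomputable def opCLM {d : ℕ} (A : Matrix (Fin d) (Fin d) ℂ) :
    EuclideanSpace ℂ (Fin d) →L[ℂ] EuclideanSpace ℂ (Fin d) :=
  Matrix.toEuclideanCLM (𝕜 := ℂ) A

lemma gap_bound {d : ℕ} (T : EuclideanSpace ℂ (Fin d) →ₗ[ℂ] EuclideanSpace ℂ (Fin d))
    (hT : T.IsSymmetric) (γ lam : ℝ) (hlam : 0 ≤ lam) (Ψ : EuclideanSpace ℂ (Fin d))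
    (heigspace : ∀ v, T v = (γ:ℂ) • v → ∃ c : ℂ, v = c • Ψ)
    (hgap : ∀ (μ : ℂ) v, v ≠ 0 → T v = μ • v → μ ≠ (γ:ℂ) → lam ≤ ‖μ - (γ:ℂ)‖)
    (v : EuclideanSpace ℂ (Fin d)) (hv : ⟪Ψ, v⟫_ℂ = 0) :
    lam * ‖v‖ ≤ ‖T v - (γ:ℂ) • v‖ := by
  have hn : Module.finrank ℂ (EuclideanSpace ℂ (Fin d)) = d := finrank_euclideanSpace_fin
  set b := hT.eigenvectorBasis hn with hb
  set μ := hT.eigenvalues hn with hμ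
  have hnormsq : ∀ x : EuclideanSpace ℂ (Fin d), ‖x‖^2 = ∑ i, ‖⟪b i, x⟫_ℂ‖^2 := by
    intro x
    have h1 : ‖x‖ = ‖b.repr x‖ := (b.repr.norm_map x).symm
    rw [h1, EuclideanSpace.norm_eq, Real.sq_sqrt (by positivity)]
    simp [OrthonormalBasis.repr_apply_apply]
  have hcoord : ∀ i, ⟪b i, T v - (γ:ℂ) • v⟫_ℂ = ((μ i : ℂ) - γ) * ⟪b i, v⟫_ℂ := by
    intro i
    rw [inner_sub_right, inner_smul_right, ← hT (b i) v,
      LinearMap.IsSymmetric.apply_eigenvectorBasis, inner_smul_left]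
    ring_nf
    simp [Complex.conj_ofReal]
    ring
  have key : ∀ i, lam^2 * ‖⟪b i, v⟫_ℂ‖^2 ≤ ‖⟪b i, T v - (γ:ℂ) • v⟫_ℂ‖^2 := by
    intro i
    rw [hcoord i]
    by_cases hc : (μ i : ℂ) = (γ : ℂ)
    · obtain ⟨c, hcΨ⟩ := heigspace (b i) (by
        rw [show T (b i) = _ from hT.apply_eigenvectorBasis hn i]
        exact congrArg (· • b i) hc)
      have : ⟪b i, v⟫_ℂ = 0 := by
        rw [hcΨ, inner_smul_left, hv, mul_zero]
      simp [this]
    · have hge : lam ≤ ‖(μ i : ℂ) - γ‖ := by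
        refine hgap _ (b i) ?_ ?_ hc
        · exact (hT.hasEigenvector_eigenvectorBasis hn i).2
        · exact hT.apply_eigenvectorBasis hn i
      rw [norm_mul]
      have h2 : ‖((μ i : ℂ) - γ)‖ = ‖(μ i : ℂ) - γ‖ := rfl
      rw [mul_pow]
      gcongr
  have hsum : lam^2 * ‖v‖^2 ≤ ‖T v - (γ:ℂ) • v‖^2 := by
    rw [hnormsq v, hnormsq (T v - (γ:ℂ) • v), Finset.mul_sum]
    exact Finset.sum_le_sum fun i _ => key i
  have h3 : (lam * ‖v‖)^2 ≤ ‖T v - (γ:ℂ) • v‖^2 := by rw [mul_pow]; exact hsum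
  calc lam * ‖v‖ = √((lam * ‖v‖)^2) := (Real.sqrt_sq (by positivity)).symm
    _ ≤ √(‖T v - (γ:ℂ) • v‖^2) := Real.sqrt_le_sqrt h3
    _ = _ := Real.sqrt_sq (norm_nonneg _)

/-- **Eigenvector derivative bound in the general eigenvalue case.** -/
theorem eigenvector_deriv_bound_general {d : ℕ} (hd : 1 ≤ d)
    (lam M₁ : ℝ) (hlam : 0 < lam) (hM₁ : 0 ≤ M₁)
    (H H' : ℝ → Matrix (Fin d) (Fin d) ℂ)
    (hHd : ∀ s ∈ Set.Icc (0:ℝ) 1, HasDerivAt (fun t => opCLM (H t)) (opCLM (H' s)) s)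
    (hherm : ∀ s ∈ Set.Icc (0:ℝ) 1, (H s).IsHermitian)
    (hM₁b : ∀ s ∈ Set.Icc (0:ℝ) 1, ‖opCLM (H' s)‖ ≤ M₁)
    (Ψ Ψ' : ℝ → EuclideanSpace ℂ (Fin d))
    (hΨd : ∀ s ∈ Set.Icc (0:ℝ) 1, HasDerivAt Ψ (Ψ' s) s)
    (hΨnorm : ∀ s ∈ Set.Icc (0:ℝ) 1, ‖Ψ s‖ = 1)
    (hphase : ∀ s ∈ Set.Icc (0:ℝ) 1, ⟪Ψ' s, Ψ s⟫_ℂ = 0)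
    (γ γ' : ℝ → ℝ)
    (hγd : ∀ s ∈ Set.Icc (0:ℝ) 1, HasDerivAt γ (γ' s) s)
    (heig : ∀ s ∈ Set.Icc (0:ℝ) 1, opCLM (H s) (Ψ s) = (γ s : ℂ) • Ψ s)
    (heigspace : ∀ s ∈ Set.Icc (0:ℝ) 1, ∀ v : EuclideanSpace ℂ (Fin d),
      opCLM (H s) v = (γ s : ℂ) • v → ∃ c : ℂ, v = c • Ψ s)
    (hgap : ∀ s ∈ Set.Icc (0:ℝ) 1, ∀ (μ : ℂ) (v : EuclideanSpace ℂ (Fin d)), v ≠ 0 →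
      opCLM (H s) v = μ • v → μ ≠ (γ s : ℂ) → lam ≤ ‖μ - (γ s : ℂ)‖) :
    ∀ s ∈ Set.Icc (0:ℝ) 1, ‖Ψ' s‖ ≤ 2 * M₁ / lam := by
  intro s hs
  -- symmetry of the operator
  have hsym : LinearMap.IsSymmetric ((opCLM (H s)).toLinearMap :
      EuclideanSpace ℂ (Fin d) →ₗ[ℂ] EuclideanSpace ℂ (Fin d)) := by
    rw [opCLM, Matrix.coe_toEuclideanCLM_eq_toEuclideanLin]
    exact Matrix.isHermitian_iff_isSymmetric.mp (hherm s hs)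
  -- orthogonality facts
  have hpp : ⟪Ψ s, Ψ' s⟫_ℂ = 0 := by
    rw [← inner_conj_symm, hphase s hs, map_zero]
  -- derivative identity
  have hHdR : HasDerivAt (fun t => (opCLM (H t)).restrictScalars ℝ)
      ((opCLM (H' s)).restrictScalars ℝ) s :=
    (ContinuousLinearMap.restrictScalarsL ℂ (EuclideanSpace ℂ (Fin d))
      (EuclideanSpace ℂ (Fin d)) ℝ ℝ).hasFDerivAt.comp_hasDerivAt s (hHd s hs)
  have hF : HasDerivAt (fun t => opCLM (H t) (Ψ t))
      (opCLM (H' s) (Ψ s) + opCLM (H s) (Ψ' s)) s :=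
    hHdR.clm_apply (hΨd s hs)
  have hγC : HasDerivAt (fun t => ((γ t : ℂ))) ((γ' s : ℂ)) s := by
    exact (hγd s hs).ofReal_comp
  have hG : HasDerivAt (fun t => (γ t : ℂ) • Ψ t)
      ((γ' s : ℂ) • Ψ s + (γ s : ℂ) • Ψ' s) s := by
    have := hγC.smul (hΨd s hs); rwa [add_comm] at this
  have hu : UniqueDiffOn ℝ (Set.Icc (0:ℝ) 1) := uniqueDiffOn_Icc one_pos
  have heqD : opCLM (H' s) (Ψ s) + opCLM (H s) (Ψ' s)
      = (γ' s : ℂ) • Ψ s + (γ s : ℂ) • Ψ' s := by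
    have h1 := hF.hasDerivWithinAt (s := Set.Icc (0:ℝ) 1)
    have h2 : HasDerivWithinAt (fun t => opCLM (H t) (Ψ t))
        ((γ' s : ℂ) • Ψ s + (γ s : ℂ) • Ψ' s) (Set.Icc (0:ℝ) 1) s :=
      (hG.hasDerivWithinAt).congr (fun y hy => heig y hy) (heig s hs)
    rw [← h1.derivWithin (hu s hs), ← h2.derivWithin (hu s hs)]
  -- the derivative of γ equals ⟪Ψ, H'Ψ⟫
  have hinner1 : ⟪Ψ s, Ψ s⟫_ℂ = 1 := by
    rw [inner_self_eq_norm_sq_to_K, hΨnorm s hs]; norm_num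
  have hHΨ' : ⟪Ψ s, opCLM (H s) (Ψ' s)⟫_ℂ = 0 := by
    have := (hsym (Ψ s) (Ψ' s)).symm
    simp only [ContinuousLinearMap.coe_coe] at this
    rw [this, heig s hs, inner_smul_left, hpp, mul_zero]
  have hγ'eq : (γ' s : ℂ) = ⟪Ψ s, opCLM (H' s) (Ψ s)⟫_ℂ := by
    have := congrArg (fun w => ⟪Ψ s, w⟫_ℂ) heqD
    simp only [inner_add_right, inner_smul_right, hHΨ', hpp, hinner1,
      mul_zero, mul_one, add_zero] at this
    exact this.symm
  have hγ'bd : ‖(γ' s : ℂ)‖ ≤ M₁ := by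
    rw [hγ'eq]
    calc ‖⟪Ψ s, opCLM (H' s) (Ψ s)⟫_ℂ‖
        ≤ ‖Ψ s‖ * ‖opCLM (H' s) (Ψ s)‖ := norm_inner_le_norm _ _
      _ ≤ 1 * M₁ := by
          have h2 : ‖opCLM (H' s) (Ψ s)‖ ≤ M₁ := by
            calc ‖opCLM (H' s) (Ψ s)‖ ≤ ‖opCLM (H' s)‖ * ‖Ψ s‖ :=
                (opCLM (H' s)).le_opNorm _
              _ = ‖opCLM (H' s)‖ := by rw [hΨnorm s hs, mul_one]
              _ ≤ M₁ := hM₁b s hs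
          rw [hΨnorm s hs]
          exact mul_le_mul_of_nonneg_left h2 zero_le_one
      _ = M₁ := one_mul _
  -- rearrangement: (H - γ)Ψ' = γ'Ψ - H'Ψ
  have hrearr : opCLM (H s) (Ψ' s) - (γ s : ℂ) • Ψ' s
      = (γ' s : ℂ) • Ψ s - opCLM (H' s) (Ψ s) := by
    have := heqD
    abel_nf
    linear_combination (norm := abel_nf) heqD
  -- apply the gap bound
  have hgb := gap_bound (opCLM (H s)).toLinearMap hsym (γ s) lam hlam.le
    (Ψ s) (fun v hv => heigspace s hs v (by simpa using hv))
    (fun μ v hv h1 h2 => hgap s hs μ v hv (by simpa using h1) h2) (Ψ' s) hpp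
  simp only [ContinuousLinearMap.coe_coe] at hgb
  rw [hrearr] at hgb
  have hrhs : ‖(γ' s : ℂ) • Ψ s - opCLM (H' s) (Ψ s)‖ ≤ 2 * M₁ := by
    calc ‖(γ' s : ℂ) • Ψ s - opCLM (H' s) (Ψ s)‖
        ≤ ‖(γ' s : ℂ) • Ψ s‖ + ‖opCLM (H' s) (Ψ s)‖ := norm_sub_le _ _
      _ ≤ M₁ + M₁ := by
          gcongr
          · rw [norm_smul, hΨnorm s hs, mul_one]; exact hγ'bd
          · calc ‖opCLM (H' s) (Ψ s)‖ ≤ ‖opCLM (H' s)‖ * ‖Ψ s‖ :=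
                (opCLM (H' s)).le_opNorm _
              _ ≤ M₁ := by rw [hΨnorm s hs, mul_one]; exact hM₁b s hs
      _ = 2 * M₁ := by ring
  rw [le_div_iff₀ hlam, mul_comm]
  exact le_trans hgb hrhs
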